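/- Let A be a complex Banach algebra possessing a contractive approximate identity, and let H be a Hilbert A-module. Then H is sub-tracing if and only if Tr_K(H) = K for every closed A-invariant subspace K of H (regarded as a Hilbert A-module under the restricted action). -/

import Mathlib

noncomputable section

open Filter

open scoped ENNReal

/-- A contractive approximate identity for a (possibly non-unital) normed algebra `A`:
a net `(e i)`, indexed by a nontrivial filter, with `‖e i‖ ≤ 1` for all `i`, such that
`e i * a → a` and `a * e i → a` in norm for every `a ∈ A`. -/
def HasCAI (A : Type) [NonUnitalNormedRing A] : Prop :=
  ∃ (ι : Type) (l : Filter ι) (e : ι → A), l.NeBot ∧ (∀ i, ‖e i‖ ≤ 1) ∧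
    ∀ a : A, Tendsto (fun i => e i * a) l (nhds a) ∧ Tendsto (fun i => a * e i) l (nhds a)

variable (A : Type) [NonUnitalNormedRing A] [NormedSpace ℂ A] [IsScalarTower ℂ A A]
  [SMulCommClass ℂ A A]

/-- A Hilbert `A`-module structure on the Hilbert space `K`: a contractive algebra
homomorphism `π : A → B(K)` which is nondegenerate, i.e. the linear span of
`{π a x : a ∈ A, x ∈ K}` is dense in `K`. -/
def IsHilbertRep {K : Type} [NormedAddCommGroup K] [InnerProductSpace ℂ K] [CompleteSpace K]
    (π : A →ₙₐ[ℂ] (K →L[ℂ] K)) : Prop :=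
  (∀ a : A, ‖π a‖ ≤ ‖a‖) ∧
  Dense ((Submodule.span ℂ {x : K | ∃ (a : A) (y : K), π a y = x} : Submodule ℂ K) : Set K)

/-- A bounded `A`-module map between Hilbert `A`-modules. -/
def IsModuleMap {K L : Type} [NormedAddCommGroup K] [InnerProductSpace ℂ K]
    [NormedAddCommGroup L] [InnerProductSpace ℂ L]
    (πK : A →ₙₐ[ℂ] (K →L[ℂ] K)) (πL : A →ₙₐ[ℂ] (L →L[ℂ] L)) (T : K →L[ℂ] L) : Prop :=
  ∀ (a : A) (x : K), T (πK a x) = πL a (T x)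

/-- `H` is sub-tracing: for every closed `A`-invariant subspace `E` of `H` (a Hilbert
`A`-module under the restricted action), every Hilbert `A`-module `L`, and every nonzero
bounded `A`-module map `R : E → L`, there exists a bounded `A`-module map `V : H → E`
with `R ∘ V ≠ 0`. -/
def IsSubTracing {H : Type} [NormedAddCommGroup H] [InnerProductSpace ℂ H] [CompleteSpace H]
    (πH : A →ₙₐ[ℂ] (H →L[ℂ] H)) : Prop :=
  ∀ (E : Submodule ℂ H), IsClosed (E : Set H) →
    ∀ (hinv : ∀ (a : A), ∀ x ∈ E, πH a x ∈ E),
    ∀ (L : Type) [NormedAddCommGroup L] [InnerProductSpace ℂ L] [CompleteSpace L],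
    ∀ (πL : A →ₙₐ[ℂ] (L →L[ℂ] L)), IsHilbertRep A πL →
    ∀ R : ↥E →L[ℂ] L,
      (∀ (a : A) (x : ↥E), R ⟨πH a ↑x, hinv a ↑x x.2⟩ = πL a (R x)) → R ≠ 0 →
      ∃ V : H →L[ℂ] ↥E,
        (∀ (a : A) (x : H), (↑(V (πH a x)) : H) = πH a ↑(V x)) ∧ R.comp V ≠ 0

lemma cai_tendsto_rep {ι : Type} {l : Filter ι} (hl : l.NeBot) {e : ι → A}
    (he1 : ∀ i, ‖e i‖ ≤ 1)
    (he2 : ∀ a : A, Tendsto (fun i => e i * a) l (nhds a))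
    {H : Type} [NormedAddCommGroup H] [InnerProductSpace ℂ H] [CompleteSpace H]
    (πH : A →ₙₐ[ℂ] (H →L[ℂ] H)) (hrep : IsHilbertRep A πH) (z : H) :
    Tendsto (fun i => πH (e i) z) l (nhds z) := by
  have hbd : ∀ (i : ι) (w : H), ‖πH (e i) w‖ ≤ ‖w‖ := by
    intro i w
    calc ‖πH (e i) w‖ ≤ ‖πH (e i)‖ * ‖w‖ := (πH (e i)).le_opNorm w
      _ ≤ 1 * ‖w‖ := by
          gcongr
          exact (hrep.1 _).trans (he1 i)
      _ = ‖w‖ := one_mul _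
  have hspan : ∀ w ∈ Submodule.span ℂ {x : H | ∃ (a : A) (y : H), πH a y = x},
      Tendsto (fun i => πH (e i) w) l (nhds w) := by
    intro w hw
    induction hw using Submodule.span_induction with
    | mem x hx =>
        obtain ⟨a, y, rfl⟩ := hx
        rw [← tendsto_sub_nhds_zero_iff]
        apply squeeze_zero_norm (a := fun i => ‖e i * a - a‖ * ‖y‖)
        · intro i
          have heq : πH (e i) (πH a y) - πH a y = πH (e i * a - a) y := by
            rw [map_sub, map_mul]
            simp [ContinuousLinearMap.sub_apply, ContinuousLinearMap.mul_apply]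
          rw [heq]
          calc ‖πH (e i * a - a) y‖ ≤ ‖πH (e i * a - a)‖ * ‖y‖ := (πH _).le_opNorm y
            _ ≤ ‖e i * a - a‖ * ‖y‖ := by gcongr; exact hrep.1 _
        · have h0 : Tendsto (fun i => ‖e i * a - a‖) l (nhds 0) :=
            tendsto_iff_norm_sub_tendsto_zero.mp (he2 a)
          simpa using h0.mul_const ‖y‖
    | zero => simpa using (tendsto_const_nhds : Tendsto (fun _ : ι => (0:H)) l (nhds 0))
    | add x y hx hy ihx ihy => simpa [map_add] using ihx.add ihy
    | smul c x hx ih => simpa [map_smul] using ih.const_smul c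
  rw [Metric.tendsto_nhds]
  intro ε hε
  obtain ⟨w, hw, hwz⟩ := hrep.2.exists_dist_lt z (show (0:ℝ) < ε/3 by linarith)
  filter_upwards [Metric.tendsto_nhds.mp (hspan w hw) (ε/3) (by linarith)] with i hi
  have h1 : dist (πH (e i) z) (πH (e i) w) ≤ dist z w := by
    rw [dist_eq_norm, dist_eq_norm, ← map_sub]
    exact hbd i (z - w)
  have hzw : dist z w < ε/3 := hwz
  calc dist (πH (e i) z) z
      ≤ dist (πH (e i) z) (πH (e i) w) + dist (πH (e i) w) w + dist w z :=
        dist_triangle4 _ _ _ _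
    _ < ε/3 + ε/3 + ε/3 := by
        have h2 : dist (πH (e i) z) (πH (e i) w) < ε/3 := lt_of_le_of_lt h1 hzw
        have h3 : dist w z < ε/3 := by rw [dist_comm]; exact hzw
        linarith
    _ = ε := by ring

/-- `H` is sub-tracing if and only if `Tr_E(H) = E` for every closed `A`-invariant
subspace `E` of `H`, regarded as a Hilbert `A`-module under the restricted action. -/
theorem subtracing_iff_trace_eq_top [CompleteSpace A] (hA : HasCAI A)
    (H : Type) [NormedAddCommGroup H] [InnerProductSpace ℂ H] [CompleteSpace H]
    (πH : A →ₙₐ[ℂ] (H →L[ℂ] H)) (hrep : IsHilbertRep A πH) :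
    IsSubTracing A πH ↔
      ∀ (E : Submodule ℂ H), IsClosed (E : Set H) →
        (∀ (a : A), ∀ x ∈ E, πH a x ∈ E) →
        (Submodule.span ℂ {y : ↥E | ∃ T : H →L[ℂ] ↥E,
          (∀ (a : A) (x : H), (↑(T (πH a x)) : H) = πH a ↑(T x)) ∧
          y ∈ Set.range ⇑T}).topologicalClosure = ⊤ := by
  obtain ⟨ι, l, e, hl, he1, he2⟩ := hA
  constructor
  · -- sub-tracing ⇒ trace full
    intro hst E hE hinv
    haveI : CompleteSpace E := hE.completeSpace_coe
    set G : Set ↥E := {y : ↥E | ∃ T : H →L[ℂ] ↥E,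
      (∀ (a : A) (x : H), (↑(T (πH a x)) : H) = πH a ↑(T x)) ∧ y ∈ Set.range ⇑T} with hGdef
    by_contra hS
    set S : Submodule ℂ ↥E := (Submodule.span ℂ G).topologicalClosure with hSdef
    have hScl : IsClosed (S : Set ↥E) := Submodule.isClosed_topologicalClosure _
    haveI : CompleteSpace S := hScl.completeSpace_coe
    set K : Submodule ℂ ↥E := Sᗮ with hKdef
    have hKcl : IsClosed (K : Set ↥E) := S.isClosed_orthogonal
    haveI : CompleteSpace K := hKcl.completeSpace_coe
    have hKbot : K ≠ ⊥ := fun h => hS (Submodule.orthogonal_eq_bot_iff.mp h)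
    have hKK : Kᗮ = S := Submodule.orthogonal_orthogonal S
    -- the restricted action on E
    set πE : A → (↥E →L[ℂ] ↥E) := fun a =>
      ContinuousLinearMap.codRestrict ((πH a).comp E.subtypeL) E (fun x => hinv a x x.2)
      with hπEdef
    have hπE : ∀ (a : A) (x : ↥E), ((πE a x : ↥E) : H) = πH a ↑x := fun a x => rfl
    -- S is invariant
    have hSinv : ∀ (a : A), ∀ y ∈ S, πE a y ∈ S := by
      intro a y hy
      have h1 : Submodule.map (πE a : ↥E →ₗ[ℂ] ↥E) (Submodule.span ℂ G) ≤ Submodule.span ℂ G := by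
        rw [Submodule.map_span, Submodule.span_le]
        rintro _ ⟨w, hw, rfl⟩
        obtain ⟨T, hT, z, rfl⟩ := hw
        apply Submodule.subset_span
        refine ⟨T, hT, πH a z, ?_⟩
        apply Subtype.ext
        rw [hT a z]
        rfl
      have hy' : y ∈ closure ((Submodule.span ℂ G : Submodule ℂ ↥E) : Set ↥E) := hy
      have h2 : πE a y ∈ closure (⇑(πE a) '' ((Submodule.span ℂ G : Submodule ℂ ↥E) : Set ↥E)) :=
        image_closure_subset_closure_image (πE a).continuous ⟨y, hy', rfl⟩
      have h3 : closure (⇑(πE a) '' ((Submodule.span ℂ G : Submodule ℂ ↥E) : Set ↥E)) ⊆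
          closure ((Submodule.span ℂ G : Submodule ℂ ↥E) : Set ↥E) := by
        apply closure_mono
        rintro _ ⟨w, hw, rfl⟩
        exact h1 ⟨w, hw, rfl⟩
      exact h3 h2
    set P : ↥E →L[ℂ] ↥K := K.orthogonalProjectionOnto with hPdef
    have hPS : ∀ s ∈ S, P s = 0 := by
      intro s hs
      exact Submodule.orthogonalProjectionOnto_apply_of_mem_orthogonal (hKK ▸ hs)
    have hkey : ∀ (a : A) (x : ↥E), P (πE a x) = P (πE a ↑(P x)) := by
      intro a x
      have h1 : x - ↑(P x) ∈ Kᗮ := Submodule.sub_starProjection_mem_orthogonal x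
      have h2 : πE a (x - ↑(P x)) ∈ S := hSinv a _ (hKK ▸ h1)
      have h3 : πE a x = πE a ↑(P x) + πE a (x - ↑(P x)) := by
        rw [← map_add]; congr 1; abel
      rw [h3, map_add, hPS _ h2, add_zero]
    -- the compressed action on K
    have hEadd : ∀ (a b : A) (y : ↥E), πE (a + b) y = πE a y + πE b y := by
      intro a b y; apply Subtype.ext
      show πH (a + b) ↑y = _
      rw [map_add]
      rfl
    have hEsmul : ∀ (c : ℂ) (a : A) (y : ↥E), πE (c • a) y = c • πE a y := by
      intro c a y; apply Subtype.ext
      show πH (c • a) ↑y = _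
      rw [map_smul]
      rfl
    have hEzero : ∀ (y : ↥E), πE 0 y = 0 := by
      intro y; apply Subtype.ext
      show πH 0 ↑y = _
      rw [map_zero]
      rfl
    have hEmul : ∀ (a b : A) (y : ↥E), πE (a * b) y = πE a (πE b y) := by
      intro a b y; apply Subtype.ext
      show πH (a * b) ↑y = _
      rw [map_mul]
      rfl
    set πL : A →ₙₐ[ℂ] (↥K →L[ℂ] ↥K) :=
      { toFun := fun a => P.comp ((πE a).comp K.subtypeL)
        map_smul' := by
          intro c a
          refine ContinuousLinearMap.ext fun x => ?_
          show P (πE (c • a) ↑x) = c • (P (πE a ↑x))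
          rw [hEsmul, map_smul]
        map_zero' := by
          refine ContinuousLinearMap.ext fun x => ?_
          show P (πE 0 ↑x) = 0
          rw [hEzero, map_zero]
        map_add' := by
          intro a b
          refine ContinuousLinearMap.ext fun x => ?_
          show P (πE (a + b) ↑x) = P (πE a ↑x) + P (πE b ↑x)
          rw [hEadd, map_add]
        map_mul' := by
          intro a b
          refine ContinuousLinearMap.ext fun x => ?_
          show P (πE (a * b) ↑x) = P (πE a ↑(P (πE b ↑x)))
          rw [hEmul, hkey] } with hπLdef
    have hπLapp : ∀ (a : A) (x : ↥K), πL a x = P (πE a ↑x) := fun a x => rfl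
    -- contractivity
    have hπLc : ∀ a : A, ‖πL a‖ ≤ ‖a‖ := by
      intro a
      refine ContinuousLinearMap.opNorm_le_bound _ (norm_nonneg a) (fun x => ?_)
      have h1 : ‖πL a x‖ ≤ ‖πE a ↑x‖ := by
        rw [hπLapp]
        calc ‖P (πE a ↑x)‖ ≤ ‖P‖ * ‖πE a ↑x‖ := P.le_opNorm _
          _ ≤ 1 * ‖πE a ↑x‖ := by gcongr; exact Submodule.orthogonalProjectionOnto_norm_le K
          _ = ‖πE a ↑x‖ := one_mul _
      have h2 : ‖πE a (↑x : ↥E)‖ ≤ ‖a‖ * ‖x‖ := by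
        have : ‖πE a (↑x : ↥E)‖ = ‖πH a ((↑(↑x : ↥E)) : H)‖ := rfl
        rw [this]
        calc ‖πH a ((↑(↑x : ↥E)) : H)‖ ≤ ‖πH a‖ * ‖((↑(↑x : ↥E)) : H)‖ := (πH a).le_opNorm _
          _ ≤ ‖a‖ * ‖((↑(↑x : ↥E)) : H)‖ := by gcongr; exact hrep.1 a
          _ = ‖a‖ * ‖x‖ := rfl
      exact h1.trans h2
    -- nondegeneracy
    haveI := hl
    have hπLd : Dense ((Submodule.span ℂ {x : ↥K | ∃ (a : A) (y : ↥K), πL a y = x} :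
        Submodule ℂ ↥K) : Set ↥K) := by
      intro u
      have h1 : Tendsto (fun i => πH (e i) ((↑(↑u : ↥E)) : H)) l (nhds ↑(↑u : ↥E)) :=
        cai_tendsto_rep A hl he1 (fun a => (he2 a).1) πH hrep _
      have h2 : Tendsto (fun i => πE (e i) (↑u : ↥E)) l (nhds (↑u : ↥E)) :=
        tendsto_subtype_rng.mpr h1
      have h3 : Tendsto (fun i => P (πE (e i) (↑u : ↥E))) l (nhds (P ↑u)) :=
        (P.continuous.tendsto _).comp h2
      rw [Submodule.orthogonalProjectionOnto_mem_subspace_eq_self u] at h3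
      exact mem_closure_of_tendsto h3 (Eventually.of_forall fun i =>
        Submodule.subset_span ⟨e i, u, rfl⟩)
    -- R := orthogonal projection, a nonzero module map
    obtain ⟨x0, hx0K, hx00⟩ := (Submodule.ne_bot_iff K).mp hKbot
    have hR0 : P ≠ 0 := by
      intro h
      apply hx00
      have h1 : P x0 = (⟨x0, hx0K⟩ : ↥K) := Submodule.orthogonalProjectionOnto_mem_subspace_eq_self ⟨x0, hx0K⟩
      rw [h, ContinuousLinearMap.zero_apply] at h1
      simpa using congrArg Subtype.val h1.symm
    have hRmod : ∀ (a : A) (x : ↥E), P ⟨πH a ↑x, hinv a ↑x x.2⟩ = πL a (P x) := by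
      intro a x
      exact hkey a x
    obtain ⟨V, hV, hRV⟩ := hst E hE hinv ↥K πL ⟨hπLc, hπLd⟩ P hRmod hR0
    refine hRV (ContinuousLinearMap.ext fun z => ?_)
    have hVz : V z ∈ S :=
      Submodule.le_topologicalClosure _ (Submodule.subset_span ⟨V, hV, z, rfl⟩)
    have hPVz : P (V z) = 0 := hPS _ hVz
    simp only [ContinuousLinearMap.comp_apply, ContinuousLinearMap.zero_apply]
    exact hPVz
  · -- trace full ⇒ sub-tracing
    intro htr E hE hinv L _ _ _ πL hπL R hR hRne
    by_contra hcon
    push_neg at hcon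
    apply hRne
    ext x
    have h1 : Submodule.span ℂ {y : ↥E | ∃ T : H →L[ℂ] ↥E,
        (∀ (a : A) (x : H), (↑(T (πH a x)) : H) = πH a ↑(T x)) ∧ y ∈ Set.range ⇑T} ≤
        LinearMap.ker (R : ↥E →ₗ[ℂ] L) := by
      rw [Submodule.span_le]
      rintro _ ⟨T, hT, z, rfl⟩
      have hz := ContinuousLinearMap.ext_iff.mp (hcon T hT) z
      exact LinearMap.mem_ker.mpr (by simpa using hz)
    have h2 := Submodule.topologicalClosure_minimal _ h1 (ContinuousLinearMap.isClosed_ker R)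
    rw [htr E hE hinv] at h2
    have hx : x ∈ LinearMap.ker (R : ↥E →ₗ[ℂ] L) := h2 Submodule.mem_top
    simpa using hx
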